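/- Three distinct points of the Grassmannian G(2,5) of lines in P^4 correspond to lines in special position with respect to 2-planes (i.e. every 2-plane meeting two of them also meets the third) if and only if the three lines lie in a common 2-plane and all pass through a common point. -/

import Mathlib

open Module

/-- Lines in `ℙ⁴` are modelled as 2-dimensional linear subspaces of `ℂ⁵`, and 2-planes as
3-dimensional linear subspaces.  A family of lines is in *special position* with respect to
2-planes if every 2-plane meeting all the lines but one also meets the remaining one. -/
def SpecialPosition {n : ℕ} (l : Fin n → Submodule ℂ (Fin 5 → ℂ)) : Prop :=
  ∀ i : Fin n, ∀ Λ : Submodule ℂ (Fin 5 → ℂ), finrank ℂ Λ = 3 →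
    (∀ j : Fin n, j ≠ i → Λ ⊓ l j ≠ ⊥) → Λ ⊓ l i ≠ ⊥

private lemma fin3_third : ∀ a b : Fin 3, a ≠ b → ∃ c, c ≠ a ∧ c ≠ b := by decide
private lemma fin3_two : ∀ i : Fin 3, ∃ j k : Fin 3, j ≠ i ∧ k ≠ i ∧ j ≠ k := by decide
private lemma fin3_or : ∀ a b c j : Fin 3, b ≠ a → c ≠ a → b ≠ c → j ≠ a → j = b ∨ j = c := by
  decide

private lemma rank_pos_of_ne_bot {S : Submodule ℂ (Fin 5 → ℂ)} (h : S ≠ ⊥) :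
    1 ≤ finrank ℂ S :=
  Nat.one_le_iff_ne_zero.mpr (fun h0 => h (Submodule.finrank_eq_zero.mp h0))

private lemma aux_compl (A B : Submodule ℂ (Fin 5 → ℂ)) (hAB : A ⊓ B = ⊥)
    (hB : finrank ℂ B = 2) :
    ∃ C : Submodule ℂ (Fin 5 → ℂ), A ≤ C ∧ finrank ℂ C = 3 ∧ C ⊓ B = ⊥ := by
  obtain ⟨D, hD⟩ := Submodule.exists_isCompl (A ⊔ B)
  have hADbot : A ⊓ D = ⊥ := by
    rw [eq_bot_iff]
    exact le_trans (inf_le_inf_right D le_sup_left) hD.inf_eq_bot.le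
  refine ⟨A ⊔ D, le_sup_left, ?_, ?_⟩
  · have h1 := Submodule.finrank_sup_add_finrank_inf_eq A D
    have h2 := Submodule.finrank_sup_add_finrank_inf_eq (A ⊔ B) D
    have h3 := Submodule.finrank_sup_add_finrank_inf_eq A B
    rw [hADbot, finrank_bot] at h1
    rw [hD.inf_eq_bot, hD.sup_eq_top, finrank_bot, finrank_top] at h2
    rw [hAB, finrank_bot] at h3
    have h4 : finrank ℂ (Fin 5 → ℂ) = 5 := Module.finrank_fin_fun ℂ
    have h5 : finrank ℂ (A ⊔ B : Submodule ℂ (Fin 5 → ℂ)) ≤ 5 := by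
      have := Submodule.finrank_le (A ⊔ B)
      omega
    omega
  · rw [eq_bot_iff]
    rintro x ⟨hx1, hx2⟩
    obtain ⟨y, hy, z, hz, hxe⟩ := Submodule.mem_sup.mp hx1
    have hzAB : z ∈ A ⊔ B := by
      have : z = x - y := by rw [← hxe]; ring
      rw [this]
      exact Submodule.sub_mem _ (Submodule.mem_sup_right hx2) (Submodule.mem_sup_left hy)
    have hz0 : z = 0 := by
      have : z ∈ (A ⊔ B) ⊓ D := ⟨hzAB, hz⟩
      rw [hD.inf_eq_bot] at this
      simpa using this
    have hxA : x ∈ A := by rw [← hxe, hz0, add_zero]; exact hy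
    have : x ∈ A ⊓ B := ⟨hxA, hx2⟩
    rw [hAB] at this
    simpa using this

private lemma inf_rank_le_one {s t : Submodule ℂ (Fin 5 → ℂ)} (hs : finrank ℂ s = 2)
    (ht : finrank ℂ t = 2) (hne : s ≠ t) : finrank ℂ (s ⊓ t : Submodule ℂ (Fin 5 → ℂ)) ≤ 1 := by
  by_contra h
  push_neg at h
  have h1 : s ⊓ t = s := Submodule.eq_of_le_of_finrank_le inf_le_left (by omega)
  have h2 : s ⊓ t = t := Submodule.eq_of_le_of_finrank_le inf_le_right (by omega)
  exact hne (h1 ▸ h2)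

private lemma pairwise_meet (l : Fin 3 → Submodule ℂ (Fin 5 → ℂ))
    (hl : ∀ i, finrank ℂ (l i) = 2) (hd : Function.Injective l)
    (hSP : SpecialPosition l) : ∀ a b : Fin 3, a ≠ b → l a ⊓ l b ≠ ⊥ := by
  intro a b hab hbot
  obtain ⟨k, hka, hkb⟩ := fin3_third a b hab
  have step : ∀ v ∈ l b, v ≠ 0 → l k ≤ l a ⊔ Submodule.span ℂ {v} := by
    intro v hvb hv0
    by_contra hcon
    rw [SetLike.le_def] at hcon
    push_neg at hcon
    obtain ⟨w, hwk, hw⟩ := hcon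
    have hw0 : w ≠ 0 := fun h => hw (h ▸ Submodule.zero_mem _)
    set A := Submodule.span ℂ {v} ⊔ Submodule.span ℂ {w} with hA
    have hAB : A ⊓ l a = ⊥ := by
      rw [eq_bot_iff]
      rintro x ⟨hx1, hx2⟩
      obtain ⟨y, hy, z, hz, hxe⟩ := Submodule.mem_sup.mp hx1
      obtain ⟨c, rfl⟩ := Submodule.mem_span_singleton.mp hy
      obtain ⟨d, rfl⟩ := Submodule.mem_span_singleton.mp hz
      by_cases hdz : d = 0
      · have hx : x = c • v := by rw [← hxe, hdz, zero_smul, add_zero]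
        have hxb : x ∈ l b := hx ▸ Submodule.smul_mem _ c hvb
        have hmem : x ∈ l a ⊓ l b := Submodule.mem_inf.mpr ⟨hx2, hxb⟩
        rw [hbot] at hmem
        exact hmem
      · exfalso
        apply hw
        have : w = d⁻¹ • (x - c • v) := by
          rw [← hxe, add_sub_cancel_left, smul_smul, inv_mul_cancel₀ hdz, one_smul]
        rw [this]
        refine Submodule.smul_mem _ _ (Submodule.sub_mem _ (Submodule.mem_sup_left hx2) ?_)
        exact Submodule.mem_sup_right (Submodule.smul_mem _ c (Submodule.mem_span_singleton_self v))
    obtain ⟨C, hAC, hC3, hCa⟩ := aux_compl A (l a) hAB (hl a)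
    refine hSP a C hC3 ?_ hCa
    intro j hj
    rcases fin3_or a b k j (Ne.symm hab) hka (Ne.symm hkb) hj with rfl | rfl
    · rw [Submodule.ne_bot_iff]
      exact ⟨v, ⟨hAC (Submodule.mem_sup_left (Submodule.mem_span_singleton_self v)), hvb⟩, hv0⟩
    · rw [Submodule.ne_bot_iff]
      exact ⟨w, ⟨hAC (Submodule.mem_sup_right (Submodule.mem_span_singleton_self w)), hwk⟩, hw0⟩
  have hbne : l b ≠ ⊥ := by
    intro h
    have h2 := hl b
    rw [h, finrank_bot] at h2
    omega
  obtain ⟨v, hvb, hv0⟩ := (Submodule.ne_bot_iff _).mp hbne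
  have hlt : Submodule.span ℂ {v} < l b := by
    refine lt_of_le_of_ne ?_ ?_
    · exact Submodule.span_le.mpr (by simpa using hvb)
    intro h
    have := finrank_span_singleton (K := ℂ) hv0
    rw [h, hl b] at this
    omega
  obtain ⟨v', hv'b, hv'⟩ := SetLike.exists_of_lt hlt
  have hv'0 : v' ≠ 0 := fun h => hv' (h ▸ Submodule.zero_mem _)
  have h1 := step v hvb hv0
  have h2 := step v' hv'b hv'0
  have hk_le : l k ≤ l a := by
    intro x hx
    obtain ⟨y, hy, z, hz, hxe⟩ := Submodule.mem_sup.mp (h1 hx)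
    obtain ⟨c, rfl⟩ := Submodule.mem_span_singleton.mp hz
    obtain ⟨y', hy', z', hz', hxe'⟩ := Submodule.mem_sup.mp (h2 hx)
    obtain ⟨c', rfl⟩ := Submodule.mem_span_singleton.mp hz'
    by_cases hc' : c' = 0
    · rw [hc', zero_smul, add_zero] at hxe'
      exact hxe' ▸ hy'
    · exfalso
      have hdiff : c • v - c' • v' ∈ l a := by
        have : c • v - c' • v' = y' - y := by
          have := hxe.trans hxe'.symm
          linear_combination this
        rw [this]
        exact Submodule.sub_mem _ hy' hy
      have hdiffb : c • v - c' • v' ∈ l b :=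
        Submodule.sub_mem _ (Submodule.smul_mem _ c hvb) (Submodule.smul_mem _ c' hv'b)
      have h0 : c • v - c' • v' = 0 := by
        have : c • v - c' • v' ∈ l a ⊓ l b := ⟨hdiff, hdiffb⟩
        rw [hbot] at this
        simpa using this
      apply hv'
      rw [Submodule.mem_span_singleton]
      refine ⟨c'⁻¹ * c, ?_⟩
      have : c • v = c' • v' := by linear_combination h0
      rw [mul_smul, this, smul_smul]
      field_simp
      exact one_smul _ _
  have : l k = l a := Submodule.eq_of_le_of_finrank_le hk_le (by rw [hl, hl])
  exact hka (hd this)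

private lemma inf_le_third (l : Fin 3 → Submodule ℂ (Fin 5 → ℂ))
    (hl : ∀ i, finrank ℂ (l i) = 2) (hd : Function.Injective l)
    (hSP : SpecialPosition l) :
    ∀ i j k : Fin 3, j ≠ i → k ≠ i → j ≠ k → l j ⊓ l k ≤ l i := by
  intro i j k hji hki hjk
  by_contra hcon
  have hne : l j ⊓ l k ≠ ⊥ := pairwise_meet l hl hd hSP j k hjk
  set T := l j ⊓ l k with hT
  have hT1 : finrank ℂ T = 1 := by
    have hle : finrank ℂ T ≤ 1 := inf_rank_le_one (hl j) (hl k) (fun h => hjk (hd h))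
    have := rank_pos_of_ne_bot hne
    omega
  have hTi : T ⊓ l i = ⊥ := by
    by_contra hb
    have h1 : 1 ≤ finrank ℂ (T ⊓ l i : Submodule ℂ (Fin 5 → ℂ)) := rank_pos_of_ne_bot hb
    have heq : T ⊓ l i = T := Submodule.eq_of_le_of_finrank_le inf_le_left (by omega)
    exact hcon (by rw [← heq]; exact inf_le_right)
  obtain ⟨C, hTC, hC3, hCi⟩ := aux_compl T (l i) hTi (hl i)
  refine hSP i C hC3 ?_ hCi
  intro m hm
  obtain ⟨x, hx, hx0⟩ := (Submodule.ne_bot_iff _).mp hne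
  rcases fin3_or i j k m hji hki hjk hm with rfl | rfl
  · rw [Submodule.ne_bot_iff]
    exact ⟨x, ⟨hTC hx, hx.1⟩, hx0⟩
  · rw [Submodule.ne_bot_iff]
    exact ⟨x, ⟨hTC hx, hx.2⟩, hx0⟩

private lemma coplanar_aux (l : Fin 3 → Submodule ℂ (Fin 5 → ℂ))
    (hl : ∀ i, finrank ℂ (l i) = 2) (hd : Function.Injective l)
    (hSP : SpecialPosition l) :
    finrank ℂ (l 0 ⊔ l 1 : Submodule ℂ (Fin 5 → ℂ)) = 3 ∧ l 2 ≤ l 0 ⊔ l 1 := by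
  have h01 : (0 : Fin 3) ≠ 1 := by decide
  have hne01 : l 0 ≠ l 1 := fun h => h01 (hd h)
  have hinf1 : finrank ℂ (l 0 ⊓ l 1 : Submodule ℂ (Fin 5 → ℂ)) = 1 := by
    have h1 := inf_rank_le_one (hl 0) (hl 1) hne01
    have h2 := rank_pos_of_ne_bot (pairwise_meet l hl hd hSP 0 1 h01)
    omega
  have hsup3 : finrank ℂ (l 0 ⊔ l 1 : Submodule ℂ (Fin 5 → ℂ)) = 3 := by
    have := Submodule.finrank_sup_add_finrank_inf_eq (l 0) (l 1)
    rw [hinf1, hl 0, hl 1] at this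
    omega
  refine ⟨hsup3, ?_⟩
  by_contra hcon
  rw [SetLike.le_def] at hcon
  push_neg at hcon
  obtain ⟨a, ha2, haW⟩ := hcon
  have hnle : ¬ l 1 ≤ l 0 := by
    intro h
    exact hne01 (Submodule.eq_of_le_of_finrank_le h (by rw [hl 0, hl 1]) ).symm
  rw [SetLike.le_def] at hnle
  push_neg at hnle
  obtain ⟨w, hw1, hw0⟩ := hnle
  have hwW : w ∈ l 0 ⊔ l 1 := Submodule.mem_sup_right hw1
  have hwne : w ≠ 0 := fun h => hw0 (h ▸ Submodule.zero_mem _)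
  have hane : a ≠ 0 := fun h => haW (h ▸ Submodule.zero_mem _)
  set A := Submodule.span ℂ {a} ⊔ Submodule.span ℂ {w} with hA
  have hAB : A ⊓ l 0 = ⊥ := by
    rw [eq_bot_iff]
    rintro x ⟨hx1, hx2⟩
    obtain ⟨y, hy, z, hz, hxe⟩ := Submodule.mem_sup.mp hx1
    obtain ⟨c, rfl⟩ := Submodule.mem_span_singleton.mp hy
    obtain ⟨d, rfl⟩ := Submodule.mem_span_singleton.mp hz
    by_cases hcz : c = 0
    · have hx : x = d • w := by rw [← hxe, hcz, zero_smul, zero_add]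
      have hdz : d = 0 := by
        by_contra hdz
        apply hw0
        have : w = d⁻¹ • x := by rw [hx, smul_smul, inv_mul_cancel₀ hdz, one_smul]
        rw [this]
        exact Submodule.smul_mem _ _ hx2
      rw [Submodule.mem_bot]
      rw [hx, hdz, zero_smul]
    · exfalso
      apply haW
      have : a = c⁻¹ • (x - d • w) := by
        rw [← hxe, add_sub_cancel_right, smul_smul, inv_mul_cancel₀ hcz, one_smul]
      rw [this]
      refine Submodule.smul_mem _ _ (Submodule.sub_mem _ (Submodule.mem_sup_left hx2) ?_)
      exact Submodule.smul_mem _ d hwW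
  obtain ⟨C, hAC, hC3, hC0⟩ := aux_compl A (l 0) hAB (hl 0)
  refine hSP 0 C hC3 ?_ hC0
  intro m hm
  rcases fin3_or 0 1 2 m (by decide) (by decide) (by decide) hm with rfl | rfl
  · rw [Submodule.ne_bot_iff]
    exact ⟨w, ⟨hAC (Submodule.mem_sup_right (Submodule.mem_span_singleton_self w)), hw1⟩, hwne⟩
  · rw [Submodule.ne_bot_iff]
    exact ⟨a, ⟨hAC (Submodule.mem_sup_left (Submodule.mem_span_singleton_self a)), ha2⟩, hane⟩

/-- Three distinct lines in `ℙ⁴` are in special position with respect to 2-planes iff they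
lie in a common 2-plane and all pass through a common point. -/
theorem three_lines_special_position_iff
    (l : Fin 3 → Submodule ℂ (Fin 5 → ℂ))
    (hl : ∀ i, finrank ℂ (l i) = 2)
    (hd : Function.Injective l) :
    SpecialPosition l ↔
      ((∃ Λ : Submodule ℂ (Fin 5 → ℂ), finrank ℂ Λ = 3 ∧ ∀ i, l i ≤ Λ) ∧
       (∃ P : Submodule ℂ (Fin 5 → ℂ), finrank ℂ P = 1 ∧ ∀ i, P ≤ l i)) := by
  constructor
  · intro hSP
    obtain ⟨hsup3, hl2le⟩ := coplanar_aux l hl hd hSP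
    constructor
    · refine ⟨l 0 ⊔ l 1, hsup3, ?_⟩
      intro i
      fin_cases i
      · exact le_sup_left
      · exact le_sup_right
      · exact hl2le
    · refine ⟨l 0 ⊓ l 1, ?_, ?_⟩
      · have h1 := inf_rank_le_one (hl 0) (hl 1) (fun h => (by decide : (0:Fin 3) ≠ 1) (hd h))
        have h2 := rank_pos_of_ne_bot (pairwise_meet l hl hd hSP 0 1 (by decide))
        omega
      · intro i
        fin_cases i
        · exact inf_le_left
        · exact inf_le_right
        · exact inf_le_third l hl hd hSP 2 0 1 (by decide) (by decide) (by decide)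
  · rintro ⟨⟨Λ₀, hΛ₀3, hle⟩, ⟨P, hP1, hPle⟩⟩
    intro i Λ hΛ3 hmeets
    obtain ⟨j, k, hji, hki, hjk⟩ := fin3_two i
    have hj := hmeets j hji
    have hk := hmeets k hki
    set T := Λ ⊓ Λ₀ with hT
    have hTrank : 1 ≤ finrank ℂ T := by
      rw [hT]
      have h1 := Submodule.finrank_sup_add_finrank_inf_eq Λ Λ₀
      have h2 := Submodule.finrank_le (Λ ⊔ Λ₀)
      have h4 : finrank ℂ (Fin 5 → ℂ) = 5 := Module.finrank_fin_fun ℂ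
      omega
    have hTne : T ≠ ⊥ := by
      intro h
      rw [h, finrank_bot] at hTrank
      omega
    by_cases hT2 : 2 ≤ finrank ℂ T
    · have hsub : T ⊔ l i ≤ Λ₀ := sup_le inf_le_right (hle i)
      have h1 := Submodule.finrank_sup_add_finrank_inf_eq T (l i)
      have h2 : finrank ℂ (T ⊔ l i : Submodule ℂ (Fin 5 → ℂ)) ≤ 3 := by
        have := Submodule.finrank_mono hsub
        omega
      have h3 : 1 ≤ finrank ℂ (T ⊓ l i : Submodule ℂ (Fin 5 → ℂ)) := by
        have := hl i
        omega
      have hne : T ⊓ l i ≠ ⊥ := by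
        intro h
        rw [h, finrank_bot] at h3
        omega
      intro hbad
      apply hne
      have hle2 : T ⊓ l i ≤ Λ ⊓ l i := inf_le_inf_right _ inf_le_left
      rw [hbad] at hle2
      exact le_bot_iff.mp hle2
    · have hT1 : finrank ℂ T = 1 := by omega
      have hTj : Λ ⊓ l j = T := by
        refine Submodule.eq_of_le_of_finrank_le (inf_le_inf_left Λ (hle j)) ?_
        have := rank_pos_of_ne_bot hj
        omega
      have hTk : Λ ⊓ l k = T := by
        refine Submodule.eq_of_le_of_finrank_le (inf_le_inf_left Λ (hle k)) ?_
        have := rank_pos_of_ne_bot hk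
        omega
      have hTl : T ≤ l j ⊓ l k := by
        refine le_inf ?_ ?_
        · rw [← hTj]; exact inf_le_right
        · rw [← hTk]; exact inf_le_right
      have hjk_eq : l j ⊓ l k = P := by
        symm
        refine Submodule.eq_of_le_of_finrank_le (le_inf (hPle j) (hPle k)) ?_
        have := inf_rank_le_one (hl j) (hl k) (fun h => hjk (hd h))
        omega
      intro hbad
      apply hTne
      have : T ≤ Λ ⊓ l i := by
        refine le_inf inf_le_left (le_trans hTl ?_)
        rw [hjk_eq]
        exact hPle i
      rw [hbad] at this
      exact le_bot_iff.mp this
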